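/- Let n ≥ 2 and let ≿ be a complete and transitive binary relation on [0,1]^n satisfying: (i) u ≻ v whenever u ≥ v and u ≠ v; (ii) ≿ is symmetric; (iii) ≿ is compromising; and (iv) ≿ is separable. Then ≿ coincides with the leximin relation: for all u, v ∈ [0,1]^n, u ≿ v if and only if u ≥_lex v. -/

import Mathlib

/-- The nondecreasing rearrangement of a vector. -/
noncomputable def sortedVec {n : ℕ} (u : Fin n → ℝ) : Fin n → ℝ :=
  u ∘ Tuple.sort u

/-- The leximin relation `u ≥_lex v` on vectors, comparing nondecreasing
rearrangements lexicographically. -/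
noncomputable def LeximinGe {n : ℕ} (u v : Fin n → ℝ) : Prop :=
  (∀ i, sortedVec u i = sortedVec v i) ∨
  ∃ j : Fin n, (∀ i, i < j → sortedVec u i = sortedVec v i) ∧
    sortedVec v j < sortedVec u j

section Aux12
variable {n : ℕ} (R : (Fin n → ℝ) → (Fin n → ℝ) → Prop)

lemma aux12_mem_cube {u : Fin n → ℝ} : u ∈ Set.Icc (0 : Fin n → ℝ) 1 ↔ ∀ i, 0 ≤ u i ∧ u i ≤ 1 := by
  simp [Set.mem_Icc, Pi.le_def, forall_and]

variable (htrans : ∀ u v w : Fin n → ℝ, u ∈ Set.Icc (0 : Fin n → ℝ) 1 → v ∈ Set.Icc (0 : Fin n → ℝ) 1 → w ∈ Set.Icc (0 : Fin n → ℝ) 1 → R u v → R v w → R u w)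

include htrans in
lemma aux12_PR {u v w : Fin n → ℝ} (hu : u ∈ Set.Icc (0 : Fin n → ℝ) 1) (hv : v ∈ Set.Icc (0 : Fin n → ℝ) 1) (hw : w ∈ Set.Icc (0 : Fin n → ℝ) 1)
    (h1 : R u v ∧ ¬ R v u) (h2 : R v w) : R u w ∧ ¬ R w u := by
  refine ⟨htrans u v w hu hv hw h1.1 h2, fun hwu => h1.2 ?_⟩
  exact htrans v w u hv hw hu h2 hwu

include htrans in
lemma aux12_RP {u v w : Fin n → ℝ} (hu : u ∈ Set.Icc (0 : Fin n → ℝ) 1) (hv : v ∈ Set.Icc (0 : Fin n → ℝ) 1) (hw : w ∈ Set.Icc (0 : Fin n → ℝ) 1)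
    (h1 : R u v) (h2 : R v w ∧ ¬ R w v) : R u w ∧ ¬ R w u := by
  refine ⟨htrans u v w hu hv hw h1 h2.1, fun hwu => h2.2 ?_⟩
  exact htrans w u v hw hu hv hwu h1

lemma aux12_pareto_weak
    (hcomplete : ∀ u v : Fin n → ℝ, u ∈ Set.Icc (0 : Fin n → ℝ) 1 → v ∈ Set.Icc (0 : Fin n → ℝ) 1 → R u v ∨ R v u)
    (hstrongpareto : ∀ u v : Fin n → ℝ, u ∈ Set.Icc (0 : Fin n → ℝ) 1 → v ∈ Set.Icc (0 : Fin n → ℝ) 1 → (∀ i, v i ≤ u i) → u ≠ v → R u v ∧ ¬ R v u)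
    {u v : Fin n → ℝ} (hu : u ∈ Set.Icc (0 : Fin n → ℝ) 1) (hv : v ∈ Set.Icc (0 : Fin n → ℝ) 1) (hle : ∀ i, v i ≤ u i) : R u v := by
  by_cases h : u = v
  · subst h; rcases hcomplete u u hu hu with h | h <;> exact h
  · exact (hstrongpareto u v hu hv hle h).1

lemma aux12_perm_mem {u : Fin n → ℝ} (hu : u ∈ Set.Icc (0 : Fin n → ℝ) 1) (π : Equiv.Perm (Fin n)) :
    u ∘ π ∈ Set.Icc (0 : Fin n → ℝ) 1 := by
  rw [aux12_mem_cube] at hu ⊢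
  exact fun i => hu (π i)

include htrans in
lemma aux12_strict_compro (hn : 0 < n)
    (hstrongpareto : ∀ u v : Fin n → ℝ, u ∈ Set.Icc (0 : Fin n → ℝ) 1 → v ∈ Set.Icc (0 : Fin n → ℝ) 1 → (∀ i, v i ≤ u i) → u ≠ v → R u v ∧ ¬ R v u)
    (hcompro : ∀ u v w : Fin n → ℝ, u ∈ Set.Icc (0 : Fin n → ℝ) 1 → v ∈ Set.Icc (0 : Fin n → ℝ) 1 → w ∈ Set.Icc (0 : Fin n → ℝ) 1 → (∀ i, u i ≠ v i) →
      (∀ i, min (u i) (v i) < w i ∧ w i < max (u i) (v i)) → R w u ∨ R w v)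
    {u v w : Fin n → ℝ} (hu : u ∈ Set.Icc (0 : Fin n → ℝ) 1) (hv : v ∈ Set.Icc (0 : Fin n → ℝ) 1) (hw : w ∈ Set.Icc (0 : Fin n → ℝ) 1)
    (hne : ∀ i, u i ≠ v i)
    (hbet : ∀ i, min (u i) (v i) < w i ∧ w i < max (u i) (v i)) :
    (R w u ∧ ¬ R u w) ∨ (R w v ∧ ¬ R v w) := by
  set w' : Fin n → ℝ := fun i => (min (u i) (v i) + w i) / 2 with hw'
  have hmemu := aux12_mem_cube.mp hu
  have hmemv := aux12_mem_cube.mp hv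
  have hmemw := aux12_mem_cube.mp hw
  have hlt : ∀ i, w' i < w i := by
    intro i
    have := (hbet i).1
    simp only [hw']
    linarith
  have hgt : ∀ i, min (u i) (v i) < w' i := by
    intro i
    have := (hbet i).1
    simp only [hw']
    linarith
  have hw'C : w' ∈ Set.Icc (0 : Fin n → ℝ) 1 := by
    rw [aux12_mem_cube]
    intro i
    have h0 : 0 ≤ min (u i) (v i) := le_min (hmemu i).1 (hmemv i).1
    constructor
    · have := (hgt i); linarith
    · have := hlt i; have := (hmemw i).2; linarith
  have hbet' : ∀ i, min (u i) (v i) < w' i ∧ w' i < max (u i) (v i) := by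
    intro i
    exact ⟨hgt i, lt_trans (hlt i) (hbet i).2⟩
  have hP : R w w' ∧ ¬ R w' w := by
    refine hstrongpareto w w' hw hw'C (fun i => (hlt i).le) ?_
    intro h
    have h0 := hlt ⟨0, hn⟩
    rw [h] at h0
    exact lt_irrefl _ h0
  rcases hcompro u v w' hu hv hw'C hne hbet' with h | h
  · exact Or.inl (aux12_PR R htrans hw hw'C hu hP h)
  · exact Or.inr (aux12_PR R htrans hw hw'C hv hP h)

include htrans in
lemma aux12_ham_core (hn : 2 ≤ n)
    (hcomplete : ∀ u v : Fin n → ℝ, u ∈ Set.Icc (0 : Fin n → ℝ) 1 →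
      v ∈ Set.Icc (0 : Fin n → ℝ) 1 → R u v ∨ R v u)
    (hstrongpareto : ∀ u v : Fin n → ℝ, u ∈ Set.Icc (0 : Fin n → ℝ) 1 →
      v ∈ Set.Icc (0 : Fin n → ℝ) 1 → (∀ i, v i ≤ u i) → u ≠ v →
      R u v ∧ ¬ R v u)
    (hsymm : ∀ u : Fin n → ℝ, u ∈ Set.Icc (0 : Fin n → ℝ) 1 →
      ∀ π : Equiv.Perm (Fin n), R u (u ∘ π) ∧ R (u ∘ π) u)
    (hcompro : ∀ u v w : Fin n → ℝ, u ∈ Set.Icc (0 : Fin n → ℝ) 1 →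
      v ∈ Set.Icc (0 : Fin n → ℝ) 1 → w ∈ Set.Icc (0 : Fin n → ℝ) 1 →
      (∀ i, u i ≠ v i) →
      (∀ i, min (u i) (v i) < w i ∧ w i < max (u i) (v i)) →
      R w u ∨ R w v)
    (hsep : ∀ S : Set (Fin n), ∀ u u' v v' : Fin n → ℝ,
      u ∈ Set.Icc (0 : Fin n → ℝ) 1 → u' ∈ Set.Icc (0 : Fin n → ℝ) 1 →
      v ∈ Set.Icc (0 : Fin n → ℝ) 1 → v' ∈ Set.Icc (0 : Fin n → ℝ) 1 →
      (∀ i ∈ S, u i = u' i) → (∀ i ∈ S, v i = v' i) →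
      (∀ j ∉ S, u j = v j) → (∀ j ∉ S, u' j = v' j) →
      (R u v ↔ R u' v'))
    {x y : Fin n → ℝ} (hx : x ∈ Set.Icc (0 : Fin n → ℝ) 1)
    (hy : y ∈ Set.Icc (0 : Fin n → ℝ) 1)
    (i0 i1 : Fin n) (hi0 : i0.val = 0) (hi1 : i1.val = 1)
    (hagree : ∀ k : Fin n, 2 ≤ k.val → x k = y k)
    (h1 : y i0 < x i0) (h2 : x i0 < x i1) (h3 : x i1 < y i1) :
    R x y ∧ ¬ R y x := by
  have hnz : NeZero n := ⟨by omega⟩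
  have hmx := aux12_mem_cube.mp hx
  have hmy := aux12_mem_cube.mp hy
  set x0 := x i0 with hx0
  set x1 := x i1 with hx1
  set y0 := y i0 with hy0
  set y1 := y i1 with hy1
  set N : ℝ := (n : ℝ) with hNdef
  have hN2 : (2 : ℝ) ≤ N := by rw [hNdef]; exact_mod_cast hn
  have hN1 : (0 : ℝ) < N + 1 := by linarith
  set d : ℝ := x1 - x0 with hd'
  have hd : 0 < d := by simp only [hd']; linarith
  set δ : ℝ := d / (2 * (N + 1)) with hδ'
  have hδ : 0 < δ := by positivity
  set c : Fin n → ℝ := fun k => x0 + d * (N + 1 - (k.val : ℝ)) / (N + 1) with hc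
  have hkval : ∀ k : Fin n, 2 ≤ k.val → (2 : ℝ) ≤ (k.val : ℝ) ∧ (k.val : ℝ) ≤ N - 1 := by
    intro k hk
    refine ⟨by exact_mod_cast hk, ?_⟩
    have : k.val + 1 ≤ n := k.isLt
    have : ((k.val : ℝ) + 1) ≤ N := by rw [hNdef]; exact_mod_cast this
    linarith
  -- key bounds for indices with val ≥ 2
  have hclow : ∀ k : Fin n, 2 ≤ k.val → x0 + δ < c k - δ := by
    intro k hk
    obtain ⟨hr2, hrN⟩ := hkval k hk
    set r := (k.val : ℝ)
    have key : δ + δ < d*(N+1-r)/(N+1) := by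
      simp only [hδ']
      rw [← add_div, div_lt_div_iff₀ (by positivity) hN1]
      nlinarith [mul_pos hd hN1, mul_nonneg (mul_nonneg hd.le (by linarith : (0:ℝ) ≤ N - 1 - r)) hN1.le]
    simp only [hc]
    linarith
  have hchigh : ∀ k : Fin n, 2 ≤ k.val → c k + δ < x1 := by
    intro k hk
    obtain ⟨hr2, hrN⟩ := hkval k hk
    set r := (k.val : ℝ)
    have key : d*(N+1-r)/(N+1) + δ < d := by
      simp only [hδ']
      rw [div_add_div _ _ (ne_of_gt hN1) (by positivity), div_lt_iff₀ (by positivity)]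
      nlinarith [mul_pos hd hN1, mul_nonneg (mul_nonneg hd.le (by linarith : (0:ℝ) ≤ 2*r - 2)) hN1.le]
    simp only [hc, hd'] at key ⊢
    linarith
  set vj : ℝ := x0 + d * N / (N + 1) with hvj'
  have hvj1 : x0 < vj := by
    simp only [hvj']
    have : 0 < d * N / (N+1) := by positivity
    linarith
  have hvj2 : vj < x1 := by
    have : d * N / (N + 1) < d := by
      rw [div_lt_iff₀ hN1]; nlinarith
    simp only [hvj', hd'] at this ⊢
    linarith
  -- the four auxiliary vectors
  set x' : Fin n → ℝ := fun k => if k.val ≤ 1 then x k else c k with hxp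
  set y' : Fin n → ℝ := fun k => if k.val ≤ 1 then y k else c k with hyp
  set u : Fin n → ℝ := fun k => if k.val ≤ 1 then y k else c k + δ with hu
  set v : Fin n → ℝ := fun k => if k.val = 0 then y1 else if k.val = 1 then vj else c k - δ with hv
  have hcC : ∀ k : Fin n, 2 ≤ k.val → 0 ≤ c k - δ ∧ c k + δ ≤ 1 := by
    intro k hk
    have hl := hclow k hk
    have hh := hchigh k hk
    have := (hmx i0).1
    have := (hmx i1).2
    constructor <;> [skip; skip] <;> simp only [hx0, hx1] at * <;> linarith
  have hxC' : x' ∈ Set.Icc (0 : Fin n → ℝ) 1 := by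
    rw [aux12_mem_cube]; intro k
    simp only [hxp]
    by_cases h : k.val ≤ 1
    · simp only [if_pos h]; exact hmx k
    · simp only [if_neg h]
      have hk2 : 2 ≤ k.val := by omega
      have := hcC k hk2
      constructor <;> linarith [hδ]
  have hyC' : y' ∈ Set.Icc (0 : Fin n → ℝ) 1 := by
    rw [aux12_mem_cube]; intro k
    simp only [hyp]
    by_cases h : k.val ≤ 1
    · simp only [if_pos h]; exact hmy k
    · simp only [if_neg h]
      have hk2 : 2 ≤ k.val := by omega
      have := hcC k hk2
      constructor <;> linarith [hδ]
  have huC : u ∈ Set.Icc (0 : Fin n → ℝ) 1 := by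
    rw [aux12_mem_cube]; intro k
    simp only [hu]
    by_cases h : k.val ≤ 1
    · simp only [if_pos h]; exact hmy k
    · simp only [if_neg h]
      have hk2 : 2 ≤ k.val := by omega
      have := hcC k hk2
      constructor <;> linarith [hδ]
  have hvC : v ∈ Set.Icc (0 : Fin n → ℝ) 1 := by
    rw [aux12_mem_cube]; intro k
    simp only [hv]
    by_cases h0 : k.val = 0
    · simp only [if_pos h0]; exact hmy i1
    · simp only [if_neg h0]
      by_cases h1' : k.val = 1
      · simp only [if_pos h1']
        have := (hmx i0).1
        have := (hmx i1).2
        simp only [hx0, hx1] at *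
        constructor <;> linarith
      · simp only [if_neg h1']
        have hk2 : 2 ≤ k.val := by omega
        have := hcC k hk2
        have := (hmx i0).1
        have := (hmx i1).2
        simp only [hx0, hx1] at *
        constructor <;> linarith
  
  have hval0 : ∀ k : Fin n, k.val = 0 → k = i0 := fun k hk => Fin.ext (by omega)
  have hval1 : ∀ k : Fin n, k.val = 1 → k = i1 := fun k hk => Fin.ext (by omega)
  -- u and v differ everywhere
  have hy0y1 : y0 ≠ y1 := by intro h; rw [h] at h1; linarith
  have hy1vj : y1 ≠ vj := by intro h; linarith
  have hne : ∀ k, u k ≠ v k := by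
    intro k
    simp only [hu, hv]
    by_cases h0 : k.val = 0
    · rw [hval0 k h0]
      simp only [hi0]
      norm_num
      exact hy0y1
    · by_cases hone : k.val = 1
      · rw [hval1 k hone]
        simp only [hi1]
        norm_num
        exact hy1vj
      · have hk2 : 2 ≤ k.val := by omega
        simp only [if_neg h0, if_neg hone, if_neg (by omega : ¬ k.val ≤ 1)]
        intro h; linarith
  -- x' is strictly between u and v
  have hbet : ∀ k, min (u k) (v k) < x' k ∧ x' k < max (u k) (v k) := by
    intro k
    by_cases h0 : k.val = 0
    · have hk := hval0 k h0
      subst hk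
      simp only [hu, hv, hxp, hi0]
      norm_num
      constructor
      · exact Or.inl h1
      · exact Or.inr (show x0 < y1 by linarith)
    · by_cases hone : k.val = 1
      · have hk := hval1 k hone
        subst hk
        simp only [hu, hv, hxp, hi1]
        norm_num
        constructor
        · exact Or.inr hvj2
        · exact Or.inl h3
      · have hk2 : 2 ≤ k.val := by omega
        simp only [hu, hv, hxp, if_neg (by omega : ¬ k.val ≤ 1), if_neg h0, if_neg hone]
        constructor
        · calc min (c k + δ) (c k - δ) ≤ c k - δ := min_le_right _ _
            _ < c k := by linarith
        · calc c k < c k + δ := by linarith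
            _ ≤ max (c k + δ) (c k - δ) := le_max_left _ _
  have hcomp := aux12_strict_compro R htrans (by omega : 0 < n) hstrongpareto hcompro
    huC hvC hxC' hne hbet
  -- R u y'
  have huy : R u y' := by
    apply aux12_pareto_weak R hcomplete hstrongpareto huC hyC'
    intro k
    simp only [hu, hyp]
    by_cases h : k.val ≤ 1
    · simp only [if_pos h]; exact le_rfl
    · simp only [if_neg h]; linarith
  -- R v y' via rotation permutation
  have hsubval : ∀ k : Fin n, (k - 1 : Fin n).val = if k.val = 0 then n - 1 else k.val - 1 := by
    intro k
    rw [Fin.sub_def]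
    have h1' : ((1 : Fin n) : ℕ) = 1 := by
      have := Nat.mod_eq_of_lt (show 1 < n by omega)
      simp [Fin.val_one', this]
    simp only [h1']
    have hk := k.isLt
    rcases eq_or_ne k.val 0 with h | h
    · rw [if_pos h, h]
      simp [Nat.mod_eq_of_lt (show n - 1 < n by omega)]
    · rw [if_neg h]
      have h2 : n - 1 + k.val = n + (k.val - 1) := by omega
      rw [h2, Nat.add_mod_left, Nat.mod_eq_of_lt (by omega)]
  set π : Equiv.Perm (Fin n) := Equiv.subRight (1 : Fin n) with hπ
  have hwC : v ∘ π ∈ Set.Icc (0 : Fin n → ℝ) 1 := aux12_perm_mem hvC π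
  have hvw : R v (v ∘ π) := (hsymm v hvC π).1
  have hwy : ∀ k, y' k ≤ (v ∘ π) k := by
    intro k
    have hπk : π k = k - 1 := by simp [hπ, Equiv.subRight_apply]
    simp only [Function.comp_apply, hπk]
    have hs := hsubval k
    by_cases h0 : k.val = 0
    · rw [if_pos h0] at hs
      have hyk : y' k = y0 := by
        rw [hval0 k h0]; simp only [hyp, hi0, hy0]; norm_num
      rw [hyk]
      by_cases hn2 : n = 2
      · have : (k - 1 : Fin n).val = 1 := by omega
        simp only [hv, this]
        norm_num
        linarith
      · have hge : 2 ≤ (k - 1 : Fin n).val := by omega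
        simp only [hv, if_neg (by omega : ¬ (k - 1 : Fin n).val = 0),
          if_neg (by omega : ¬ (k - 1 : Fin n).val = 1)]
        have := hclow (k - 1) hge
        linarith
    · rw [if_neg h0] at hs
      by_cases hone : k.val = 1
      · have : (k - 1 : Fin n).val = 0 := by omega
        simp only [hv, this]
        norm_num
        rw [hval1 k hone]
        simp only [hyp, hi1, hy1]
        norm_num
      · have hk2 : 2 ≤ k.val := by omega
        have hyk : y' k = c k := by
          simp only [hyp, if_neg (by omega : ¬ k.val ≤ 1)]
        rw [hyk]
        by_cases hk3 : k.val = 2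
        · have : (k - 1 : Fin n).val = 1 := by omega
          simp only [hv, this]
          norm_num
          simp only [hc, hvj']
          have hcast : ((k.val : ℕ) : ℝ) = 2 := by rw [hk3]; norm_num
          rw [hcast]
          have : d * (N + 1 - 2) / (N + 1) ≤ d * N / (N + 1) := by gcongr <;> linarith
          linarith
        · have hge : 2 ≤ (k - 1 : Fin n).val := by omega
          simp only [hv, if_neg (by omega : ¬ (k - 1 : Fin n).val = 0),
            if_neg (by omega : ¬ (k - 1 : Fin n).val = 1)]
          have hcast : (((k - 1 : Fin n).val : ℕ) : ℝ) = (k.val : ℝ) - 1 := by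
            rw [hs, Nat.cast_sub (by omega : 1 ≤ k.val)]
            norm_num
          simp only [hc]
          rw [hcast]
          have key : d * (N + 1 - ((k.val : ℝ) - 1)) / (N + 1)
              - d * (N + 1 - (k.val : ℝ)) / (N + 1) = 2 * δ := by
            simp only [hδ']
            field_simp
            ring
          linarith
  have hvy : R v y' := by
    refine htrans v (v ∘ π) y' hvC hwC hyC' hvw ?_
    exact aux12_pareto_weak R hcomplete hstrongpareto hwC hyC' hwy
  -- combine via compromising
  have hPxy' : R x' y' ∧ ¬ R y' x' := by
    rcases hcomp with h | h
    · exact aux12_PR R htrans hxC' huC hyC' h huy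
    · exact aux12_PR R htrans hxC' hvC hyC' h hvy
  -- transfer back via separability
  set S : Set (Fin n) := {k | k.val ≤ 1} with hS
  have honS_x : ∀ k ∈ S, x k = x' k := by
    intro k hk
    simp only [hS, Set.mem_setOf_eq] at hk
    simp only [hxp, if_pos hk]
  have honS_y : ∀ k ∈ S, y k = y' k := by
    intro k hk
    simp only [hS, Set.mem_setOf_eq] at hk
    simp only [hyp, if_pos hk]
  have hoffS : ∀ k ∉ S, x k = y k := by
    intro k hk
    simp only [hS, Set.mem_setOf_eq] at hk
    exact hagree k (by omega)
  have hoffS' : ∀ k ∉ S, x' k = y' k := by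
    intro k hk
    simp only [hS, Set.mem_setOf_eq] at hk
    simp only [hxp, hyp, if_neg hk]
  have hiff1 : R x y ↔ R x' y' :=
    hsep S x x' y y' hx hxC' hy hyC' honS_x honS_y hoffS hoffS'
  have hiff2 : R y x ↔ R y' x' :=
    hsep S y y' x x' hy hyC' hx hxC' honS_y honS_x
      (fun k hk => (hoffS k hk).symm) (fun k hk => (hoffS' k hk).symm)
  exact ⟨hiff1.mpr hPxy'.1, fun h => hPxy'.2 (hiff2.mp h)⟩

include htrans in
lemma aux12_ham_gen (hn : 2 ≤ n)
    (hcomplete : ∀ u v : Fin n → ℝ, u ∈ Set.Icc (0 : Fin n → ℝ) 1 →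
      v ∈ Set.Icc (0 : Fin n → ℝ) 1 → R u v ∨ R v u)
    (hstrongpareto : ∀ u v : Fin n → ℝ, u ∈ Set.Icc (0 : Fin n → ℝ) 1 →
      v ∈ Set.Icc (0 : Fin n → ℝ) 1 → (∀ i, v i ≤ u i) → u ≠ v →
      R u v ∧ ¬ R v u)
    (hsymm : ∀ u : Fin n → ℝ, u ∈ Set.Icc (0 : Fin n → ℝ) 1 →
      ∀ π : Equiv.Perm (Fin n), R u (u ∘ π) ∧ R (u ∘ π) u)
    (hcompro : ∀ u v w : Fin n → ℝ, u ∈ Set.Icc (0 : Fin n → ℝ) 1 →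
      v ∈ Set.Icc (0 : Fin n → ℝ) 1 → w ∈ Set.Icc (0 : Fin n → ℝ) 1 →
      (∀ i, u i ≠ v i) →
      (∀ i, min (u i) (v i) < w i ∧ w i < max (u i) (v i)) →
      R w u ∨ R w v)
    (hsep : ∀ S : Set (Fin n), ∀ u u' v v' : Fin n → ℝ,
      u ∈ Set.Icc (0 : Fin n → ℝ) 1 → u' ∈ Set.Icc (0 : Fin n → ℝ) 1 →
      v ∈ Set.Icc (0 : Fin n → ℝ) 1 → v' ∈ Set.Icc (0 : Fin n → ℝ) 1 →
      (∀ i ∈ S, u i = u' i) → (∀ i ∈ S, v i = v' i) →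
      (∀ j ∉ S, u j = v j) → (∀ j ∉ S, u' j = v' j) →
      (R u v ↔ R u' v'))
    {x y : Fin n → ℝ} (hx : x ∈ Set.Icc (0 : Fin n → ℝ) 1)
    (hy : y ∈ Set.Icc (0 : Fin n → ℝ) 1)
    (i j : Fin n) (hij : i ≠ j)
    (hagree : ∀ k : Fin n, k ≠ i → k ≠ j → x k = y k)
    (h1 : y i < x i) (h2 : x i < x j) (h3 : x j < y j) :
    R x y ∧ ¬ R y x := by
  set i0 : Fin n := ⟨0, by omega⟩ with hi0'
  set i1 : Fin n := ⟨1, by omega⟩ with hi1'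
  have hi01 : i0 ≠ i1 := by simp [hi0', hi1', Fin.ext_iff]
  set σ1 : Equiv.Perm (Fin n) := Equiv.swap i0 i with hσ1
  set b : Fin n := σ1 j with hb
  have hσ1b : σ1 b = j := by simp [hb, hσ1]
  have hbi0 : b ≠ i0 := by
    intro h
    rw [h] at hσ1b
    simp [hσ1, Equiv.swap_apply_left] at hσ1b
    exact hij hσ1b
  set σ2 : Equiv.Perm (Fin n) := Equiv.swap i1 b with hσ2
  set τ : Equiv.Perm (Fin n) := σ2.trans σ1 with hτ
  have hτ0 : τ i0 = i := by
    have : σ2 i0 = i0 := Equiv.swap_apply_of_ne_of_ne hi01 (Ne.symm hbi0)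
    simp [hτ, Equiv.trans_apply, this, hσ1, Equiv.swap_apply_left]
  have hτ1 : τ i1 = j := by
    have : σ2 i1 = b := Equiv.swap_apply_left _ _
    simp [hτ, Equiv.trans_apply, this, hσ1b]
  have hxC2 : x ∘ τ ∈ Set.Icc (0 : Fin n → ℝ) 1 := aux12_perm_mem hx τ
  have hyC2 : y ∘ τ ∈ Set.Icc (0 : Fin n → ℝ) 1 := aux12_perm_mem hy τ
  have hcore : R (x ∘ τ) (y ∘ τ) ∧ ¬ R (y ∘ τ) (x ∘ τ) := by
    apply aux12_ham_core R htrans hn hcomplete hstrongpareto hsymm hcompro hsep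
      hxC2 hyC2 i0 i1 rfl rfl
    · intro k hk
      have hk0 : k ≠ i0 := by intro h; subst h; simp [hi0'] at hk
      have hk1 : k ≠ i1 := by intro h; subst h; simp [hi1'] at hk
      have h1' : τ k ≠ i := by
        intro h; rw [← hτ0] at h; exact hk0 (τ.injective h)
      have h2' : τ k ≠ j := by
        intro h; rw [← hτ1] at h; exact hk1 (τ.injective h)
      simp only [Function.comp_apply]
      exact hagree (τ k) h1' h2'
    · simpa only [Function.comp_apply, hτ0] using h1
    · simpa only [Function.comp_apply, hτ0, hτ1] using h2
    · simpa only [Function.comp_apply, hτ1] using h3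
  have hx1 := hsymm x hx τ
  have hy1 := hsymm y hy τ
  have step1 : R x (y ∘ τ) ∧ ¬ R (y ∘ τ) x :=
    aux12_RP R htrans hx hxC2 hyC2 hx1.1 hcore
  exact aux12_PR R htrans hx hyC2 hy step1 hy1.2

include htrans in
lemma aux12_min_lemma (hn : 2 ≤ n)
    (hcomplete : ∀ u v : Fin n → ℝ, u ∈ Set.Icc (0 : Fin n → ℝ) 1 →
      v ∈ Set.Icc (0 : Fin n → ℝ) 1 → R u v ∨ R v u)
    (hstrongpareto : ∀ u v : Fin n → ℝ, u ∈ Set.Icc (0 : Fin n → ℝ) 1 →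
      v ∈ Set.Icc (0 : Fin n → ℝ) 1 → (∀ i, v i ≤ u i) → u ≠ v →
      R u v ∧ ¬ R v u)
    (hsymm : ∀ u : Fin n → ℝ, u ∈ Set.Icc (0 : Fin n → ℝ) 1 →
      ∀ π : Equiv.Perm (Fin n), R u (u ∘ π) ∧ R (u ∘ π) u)
    (hcompro : ∀ u v w : Fin n → ℝ, u ∈ Set.Icc (0 : Fin n → ℝ) 1 →
      v ∈ Set.Icc (0 : Fin n → ℝ) 1 → w ∈ Set.Icc (0 : Fin n → ℝ) 1 →
      (∀ i, u i ≠ v i) →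
      (∀ i, min (u i) (v i) < w i ∧ w i < max (u i) (v i)) →
      R w u ∨ R w v)
    (hsep : ∀ S : Set (Fin n), ∀ u u' v v' : Fin n → ℝ,
      u ∈ Set.Icc (0 : Fin n → ℝ) 1 → u' ∈ Set.Icc (0 : Fin n → ℝ) 1 →
      v ∈ Set.Icc (0 : Fin n → ℝ) 1 → v' ∈ Set.Icc (0 : Fin n → ℝ) 1 →
      (∀ i ∈ S, u i = u' i) → (∀ i ∈ S, v i = v' i) →
      (∀ j ∉ S, u j = v j) → (∀ j ∉ S, u' j = v' j) →
      (R u v ↔ R u' v'))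
    {x y : Fin n → ℝ} (hx : x ∈ Set.Icc (0 : Fin n → ℝ) 1)
    (hy : y ∈ Set.Icc (0 : Fin n → ℝ) 1)
    (i0 : Fin n) (hlt : ∀ k, y i0 < x k) :
    R x y ∧ ¬ R y x := by
  have hmx := aux12_mem_cube.mp hx
  have hmy := aux12_mem_cube.mp hy
  set m : ℝ := y i0 with hm
  have hne : (Finset.univ : Finset (Fin n)).Nonempty := ⟨i0, Finset.mem_univ _⟩
  set M : ℝ := Finset.univ.inf' hne x with hM
  have hMle : ∀ k, M ≤ x k := fun k => Finset.inf'_le x (Finset.mem_univ k)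
  obtain ⟨k0, _, hk0⟩ := Finset.exists_mem_eq_inf' hne x
  have hk0' : M = x k0 := by rw [hM]; exact hk0
  have hmM : m < M := by rw [hk0']; exact hlt k0
  have hM1 : M ≤ 1 := by rw [hk0']; exact (hmx k0).2
  have hM0 : 0 ≤ M := by rw [hk0']; exact (hmx k0).1
  have hm0 : 0 ≤ m := (hmy i0).1
  set xb : Fin n → ℝ := fun _ => M with hxb
  have hxbC : xb ∈ Set.Icc (0 : Fin n → ℝ) 1 := by
    rw [aux12_mem_cube]; intro k; exact ⟨hM0, hM1⟩
  have hRxxb : R x xb := aux12_pareto_weak R hcomplete hstrongpareto hx hxbC (fun k => hMle k)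
  set yh : Fin n → ℝ := fun k => if k = i0 then m else 1 with hyh
  have hyhC : yh ∈ Set.Icc (0 : Fin n → ℝ) 1 := by
    rw [aux12_mem_cube]; intro k
    simp only [hyh]
    by_cases h : k = i0
    · simp only [if_pos h]; exact ⟨hm0, by linarith⟩
    · simp only [if_neg h]; norm_num
  have hRyhy : R yh y := by
    apply aux12_pareto_weak R hcomplete hstrongpareto hyhC hy
    intro k
    simp only [hyh]
    by_cases h : k = i0
    · simp only [if_pos h, h]; exact le_rfl
    · simp only [if_neg h]; exact (hmy k).2
  have hPxbyh : R xb yh ∧ ¬ R yh xb := by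
    rcases eq_or_lt_of_le hM1 with hM1' | hM1'
    · -- M = 1 : direct Pareto
      apply hstrongpareto xb yh hxbC hyhC
      · intro k
        simp only [hyh, hxb]
        by_cases h : k = i0
        · simp only [if_pos h]; linarith
        · simp only [if_neg h]; linarith
      · intro h
        have := congrFun h i0
        simp only [hxb, hyh, if_pos rfl] at this
        linarith
    · -- M < 1 : Hammond chain
      set t : ℕ → ℝ := fun s => m + (M - m) * ((s : ℝ) + 1) / ((n : ℝ) + 2) with ht
      have hnR : (2 : ℝ) ≤ (n : ℝ) := by exact_mod_cast hn
      have hn2 : (0 : ℝ) < (n : ℝ) + 2 := by linarith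
      have htm : ∀ s, m < t s := by
        intro s
        have h1 : (0:ℝ) < (M - m) * ((s : ℝ) + 1) / ((n : ℝ) + 2) := by
          apply div_pos
          · apply mul_pos (by linarith)
            positivity
          · exact hn2
        simp only [ht]; linarith
      have htM : ∀ s : ℕ, s ≤ n → t s < M := by
        intro s hs
        have hsR : (s : ℝ) + 1 < (n : ℝ) + 2 := by
          have : (s : ℝ) ≤ (n : ℝ) := by exact_mod_cast hs
          linarith
        have : (M - m) * ((s : ℝ) + 1) / ((n : ℝ) + 2) < (M - m) := by
          rw [div_lt_iff₀ hn2]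
          nlinarith
        simp only [ht]; linarith
      have htmono : ∀ s : ℕ, t s < t (s + 1) := by
        intro s
        have hMm : (0:ℝ) < M - m := by linarith
        simp only [ht]
        push_cast
        have key : (M - m) * ((s:ℝ) + 1) / ((n:ℝ) + 2) < (M - m) * ((s:ℝ) + 1 + 1) / ((n:ℝ) + 2) := by
          rw [div_lt_div_iff₀ hn2 hn2]
          nlinarith
        linarith
      set z : ℕ → (Fin n → ℝ) := fun s k => if k = i0 then t s else if k.val < s then M else 1
        with hz
      have hzC : ∀ s : ℕ, s ≤ n → z s ∈ Set.Icc (0 : Fin n → ℝ) 1 := by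
        intro s hs
        rw [aux12_mem_cube]; intro k
        simp only [hz]
        by_cases h : k = i0
        · simp only [if_pos h]
          exact ⟨by linarith [htm s], by linarith [htM s hs]⟩
        · simp only [if_neg h]
          by_cases h' : k.val < s
          · simp only [if_pos h']; exact ⟨hM0, hM1⟩
          · simp only [if_neg h']; norm_num
      have hchain : ∀ s : ℕ, s ≤ n → R (z s) yh ∧ ¬ R yh (z s) := by
        intro s hs
        induction s with
        | zero =>
          apply hstrongpareto (z 0) yh (hzC 0 (by omega)) hyhC
          · intro k
            simp only [hz, hyh]
            by_cases h : k = i0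
            · simp only [if_pos h]; exact (htm 0).le
            · simp only [if_neg h, if_neg (by omega : ¬ k.val < 0)]; exact le_rfl
          · intro h
            have := congrFun h i0
            simp only [hz, hyh, if_pos rfl] at this
            linarith [htm 0]
        | succ s ih =>
          have ihs := ih (by omega)
          have hstep : R (z (s+1)) (z s) ∧ ¬ R (z s) (z (s+1)) := by
            by_cases hcase : s = i0.val
            · -- only coordinate i0 changes
              apply hstrongpareto _ _ (hzC (s+1) (by omega)) (hzC s (by omega))
              · intro k
                simp only [hz]
                by_cases h : k = i0
                · simp only [if_pos h]; exact (htmono s).le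
                · simp only [if_neg h]
                  have : k.val ≠ s := by
                    intro h'; apply h; apply Fin.ext; omega
                  by_cases h' : k.val < s
                  · simp only [if_pos h', if_pos (by omega : k.val < s + 1)]; exact le_rfl
                  · simp only [if_neg h', if_neg (by omega : ¬ k.val < s + 1)]; exact le_rfl
              · intro h
                have := congrFun h i0
                simp only [hz, if_pos rfl] at this
                linarith [htmono s]
            · -- Hammond step at coordinates i0 and ⟨s⟩
              have hsn : s < n := by omega
              set js : Fin n := ⟨s, hsn⟩ with hjs
              have hji0 : i0 ≠ js := by
                intro h; apply hcase; rw [h]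
              apply aux12_ham_gen R htrans hn hcomplete hstrongpareto hsymm hcompro hsep
                (hzC (s+1) (by omega)) (hzC s (by omega)) i0 js (hji0)
              · intro k hk0 hkjs
                simp only [hz, if_neg hk0]
                have : k.val ≠ s := by
                  intro h'; apply hkjs; apply Fin.ext; exact h'
                by_cases h' : k.val < s
                · simp only [if_pos h', if_pos (by omega : k.val < s + 1)]
                · simp only [if_neg h', if_neg (by omega : ¬ k.val < s + 1)]
              · simp only [hz, if_pos rfl]; exact htmono s
              · simp only [hz, if_pos rfl, if_neg (Ne.symm hji0),
                  if_pos (show js.val < s + 1 from Nat.lt_succ_self s)]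
                exact htM (s+1) (by omega)
              · simp only [hz, if_neg (Ne.symm hji0), if_pos (show js.val < s + 1 from Nat.lt_succ_self s),
                  if_neg (show ¬ js.val < s from lt_irrefl s)]
                exact hM1'
          exact aux12_PR R htrans (hzC (s+1) (by omega)) (hzC s (by omega)) hyhC hstep ihs.1
      have hPxbz : R xb (z n) ∧ ¬ R (z n) xb := by
        apply hstrongpareto xb (z n) hxbC (hzC n (by omega))
        · intro k
          simp only [hz, hxb]
          by_cases h : k = i0
          · simp only [if_pos h]; exact (htM n (by omega)).le
          · simp only [if_neg h, if_pos k.isLt]; exact le_rfl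
        · intro h
          have := congrFun h i0
          simp only [hz, hxb, if_pos rfl] at this
          linarith [htM n (by omega)]
      exact aux12_PR R htrans hxbC (hzC n (by omega)) hyhC hPxbz (hchain n le_rfl).1
  have step1 : R x yh ∧ ¬ R yh x := aux12_RP R htrans hx hxbC hyhC hRxxb hPxbyh
  exact aux12_PR R htrans hx hyhC hy step1 hRyhy

-- facts about sortedVec
lemma aux12_sorted_mem {u : Fin n → ℝ} (hu : u ∈ Set.Icc (0 : Fin n → ℝ) 1) :
    sortedVec u ∈ Set.Icc (0 : Fin n → ℝ) 1 := aux12_perm_mem hu _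

lemma aux12_sorted_mono (u : Fin n → ℝ) : Monotone (sortedVec u) := Tuple.monotone_sort u

lemma aux12_sorted_perm (u : Fin n → ℝ) : sortedVec u = u ∘ (Tuple.sort u) := rfl

lemma aux12_eq_perm {u v : Fin n → ℝ} (h : ∀ i, sortedVec u i = sortedVec v i) :
    ∃ π : Equiv.Perm (Fin n), v = u ∘ π := by
  refine ⟨((Tuple.sort v).symm).trans (Tuple.sort u), ?_⟩
  funext k
  have h1 : sortedVec u ((Tuple.sort v).symm k) = sortedVec v ((Tuple.sort v).symm k) :=
    h _
  simp only [sortedVec, Function.comp_apply] at h1 ⊢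
  simp only [Equiv.apply_symm_apply] at h1
  rw [Equiv.trans_apply]
  exact h1.symm

include htrans in
lemma aux12_lex_lemma (hn : 2 ≤ n)
    (hcomplete : ∀ u v : Fin n → ℝ, u ∈ Set.Icc (0 : Fin n → ℝ) 1 →
      v ∈ Set.Icc (0 : Fin n → ℝ) 1 → R u v ∨ R v u)
    (hstrongpareto : ∀ u v : Fin n → ℝ, u ∈ Set.Icc (0 : Fin n → ℝ) 1 →
      v ∈ Set.Icc (0 : Fin n → ℝ) 1 → (∀ i, v i ≤ u i) → u ≠ v →
      R u v ∧ ¬ R v u)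
    (hsymm : ∀ u : Fin n → ℝ, u ∈ Set.Icc (0 : Fin n → ℝ) 1 →
      ∀ π : Equiv.Perm (Fin n), R u (u ∘ π) ∧ R (u ∘ π) u)
    (hcompro : ∀ u v w : Fin n → ℝ, u ∈ Set.Icc (0 : Fin n → ℝ) 1 →
      v ∈ Set.Icc (0 : Fin n → ℝ) 1 → w ∈ Set.Icc (0 : Fin n → ℝ) 1 →
      (∀ i, u i ≠ v i) →
      (∀ i, min (u i) (v i) < w i ∧ w i < max (u i) (v i)) →
      R w u ∨ R w v)
    (hsep : ∀ S : Set (Fin n), ∀ u u' v v' : Fin n → ℝ,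
      u ∈ Set.Icc (0 : Fin n → ℝ) 1 → u' ∈ Set.Icc (0 : Fin n → ℝ) 1 →
      v ∈ Set.Icc (0 : Fin n → ℝ) 1 → v' ∈ Set.Icc (0 : Fin n → ℝ) 1 →
      (∀ i ∈ S, u i = u' i) → (∀ i ∈ S, v i = v' i) →
      (∀ j ∉ S, u j = v j) → (∀ j ∉ S, u' j = v' j) →
      (R u v ↔ R u' v'))
    {u v : Fin n → ℝ} (hu : u ∈ Set.Icc (0 : Fin n → ℝ) 1)
    (hv : v ∈ Set.Icc (0 : Fin n → ℝ) 1)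
    (j : Fin n) (hpre : ∀ i, i < j → sortedVec u i = sortedVec v i)
    (hj : sortedVec v j < sortedVec u j) :
    R u v ∧ ¬ R v u := by
  set su := sortedVec u with hsu
  set sv := sortedVec v with hsv
  have hsuC : su ∈ Set.Icc (0 : Fin n → ℝ) 1 := aux12_sorted_mem hu
  have hsvC : sv ∈ Set.Icc (0 : Fin n → ℝ) 1 := aux12_sorted_mem hv
  have hmsu := aux12_mem_cube.mp hsuC
  have hmsv := aux12_mem_cube.mp hsvC
  have hmono : Monotone su := aux12_sorted_mono u
  set c : ℝ := (su j + sv j) / 2 with hc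
  have hc1 : sv j < c := by simp only [hc]; linarith
  have hc2 : c < su j := by simp only [hc]; linarith
  have hcC : 0 ≤ c ∧ c ≤ 1 := ⟨by linarith [(hmsv j).1], by linarith [(hmsu j).2]⟩
  set U : Fin n → ℝ := fun i => if i < j then c else su i with hU
  set V : Fin n → ℝ := fun i => if i < j then c else sv i with hV
  have hUC : U ∈ Set.Icc (0 : Fin n → ℝ) 1 := by
    rw [aux12_mem_cube]; intro i
    simp only [hU]
    by_cases h : i < j
    · simp only [if_pos h]; exact hcC
    · simp only [if_neg h]; exact hmsu i
  have hVC : V ∈ Set.Icc (0 : Fin n → ℝ) 1 := by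
    rw [aux12_mem_cube]; intro i
    simp only [hV]
    by_cases h : i < j
    · simp only [if_pos h]; exact hcC
    · simp only [if_neg h]; exact hmsv i
  -- min lemma applies to U, V
  have hPUV : R U V ∧ ¬ R V U := by
    apply aux12_min_lemma R htrans hn hcomplete hstrongpareto hsymm hcompro hsep hUC hVC j
    intro k
    have hVj : V j = sv j := by simp only [hV, if_neg (lt_irrefl j)]
    rw [hVj]
    simp only [hU]
    by_cases h : k < j
    · simp only [if_pos h]; exact hc1
    · simp only [if_neg h]
      exact lt_of_lt_of_le hj (hmono (not_lt.mp h))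
  -- transfer to su, sv via separability
  have hSsep : ∀ a b : Fin n → ℝ, True := fun _ _ => trivial
  set S : Set (Fin n) := {i | j ≤ i} with hS
  have honU : ∀ i ∈ S, su i = U i := by
    intro i hi
    simp only [hS, Set.mem_setOf_eq] at hi
    simp only [hU, if_neg (not_lt.mpr hi)]
  have honV : ∀ i ∈ S, sv i = V i := by
    intro i hi
    simp only [hS, Set.mem_setOf_eq] at hi
    simp only [hV, if_neg (not_lt.mpr hi)]
  have hoff : ∀ i ∉ S, su i = sv i := by
    intro i hi
    simp only [hS, Set.mem_setOf_eq, not_le] at hi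
    exact hpre i hi
  have hoff' : ∀ i ∉ S, U i = V i := by
    intro i hi
    simp only [hS, Set.mem_setOf_eq, not_le] at hi
    simp only [hU, hV, if_pos hi]
  have hiff1 : R su sv ↔ R U V := hsep S su U sv V hsuC hUC hsvC hVC honU honV hoff hoff'
  have hiff2 : R sv su ↔ R V U := hsep S sv V su U hsvC hVC hsuC hUC honV honU
    (fun i hi => (hoff i hi).symm) (fun i hi => (hoff' i hi).symm)
  have hPsusv : R su sv ∧ ¬ R sv su := ⟨hiff1.mpr hPUV.1, fun h => hPUV.2 (hiff2.mp h)⟩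
  -- transfer to u, v via symmetry
  have h1 : R u su ∧ R su u := by
    have := hsymm u hu (Tuple.sort u)
    exact this
  have h2 : R v sv ∧ R sv v := by
    have := hsymm v hv (Tuple.sort v)
    exact this
  have step1 : R u sv ∧ ¬ R sv u := aux12_RP R htrans hu hsuC hsvC h1.1 hPsusv
  exact aux12_PR R htrans hu hsvC hv step1 h2.2


end Aux12

/-- Analytic core of the paper's Theorem 5 (relative leximin): a complete,
transitive, strongly Paretian, symmetric, compromising and separable relation
on the unit cube coincides with the leximin relation. -/
theorem stmt_12 {n : ℕ} (hn : 2 ≤ n)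
    (R : (Fin n → ℝ) → (Fin n → ℝ) → Prop)
    (hcomplete : ∀ u v : Fin n → ℝ, u ∈ Set.Icc (0 : Fin n → ℝ) 1 →
      v ∈ Set.Icc (0 : Fin n → ℝ) 1 → R u v ∨ R v u)
    (htrans : ∀ u v w : Fin n → ℝ, u ∈ Set.Icc (0 : Fin n → ℝ) 1 →
      v ∈ Set.Icc (0 : Fin n → ℝ) 1 → w ∈ Set.Icc (0 : Fin n → ℝ) 1 →
      R u v → R v w → R u w)
    (hstrongpareto : ∀ u v : Fin n → ℝ, u ∈ Set.Icc (0 : Fin n → ℝ) 1 →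
      v ∈ Set.Icc (0 : Fin n → ℝ) 1 → (∀ i, v i ≤ u i) → u ≠ v →
      R u v ∧ ¬ R v u)
    (hsymm : ∀ u : Fin n → ℝ, u ∈ Set.Icc (0 : Fin n → ℝ) 1 →
      ∀ π : Equiv.Perm (Fin n), R u (u ∘ π) ∧ R (u ∘ π) u)
    (hcompro : ∀ u v w : Fin n → ℝ, u ∈ Set.Icc (0 : Fin n → ℝ) 1 →
      v ∈ Set.Icc (0 : Fin n → ℝ) 1 → w ∈ Set.Icc (0 : Fin n → ℝ) 1 →
      (∀ i, u i ≠ v i) →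
      (∀ i, min (u i) (v i) < w i ∧ w i < max (u i) (v i)) →
      R w u ∨ R w v)
    (hsep : ∀ S : Set (Fin n), ∀ u u' v v' : Fin n → ℝ,
      u ∈ Set.Icc (0 : Fin n → ℝ) 1 → u' ∈ Set.Icc (0 : Fin n → ℝ) 1 →
      v ∈ Set.Icc (0 : Fin n → ℝ) 1 → v' ∈ Set.Icc (0 : Fin n → ℝ) 1 →
      (∀ i ∈ S, u i = u' i) → (∀ i ∈ S, v i = v' i) →
      (∀ j ∉ S, u j = v j) → (∀ j ∉ S, u' j = v' j) →
      (R u v ↔ R u' v')) :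
    ∀ u v : Fin n → ℝ, u ∈ Set.Icc (0 : Fin n → ℝ) 1 →
      v ∈ Set.Icc (0 : Fin n → ℝ) 1 → (R u v ↔ LeximinGe u v) := by
  intro u v hu hv
  by_cases heq : ∀ i, sortedVec u i = sortedVec v i
  · -- equal sorted vectors: both sides true
    obtain ⟨π, hπ⟩ := aux12_eq_perm heq
    have hR : R u v := by rw [hπ]; exact (hsymm u hu π).1
    exact ⟨fun _ => Or.inl heq, fun _ => hR⟩
  · -- find the minimal differing coordinate
    push_neg at heq
    set D : Finset (Fin n) := Finset.univ.filter (fun i => sortedVec u i ≠ sortedVec v i)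
      with hD
    have hDne : D.Nonempty := by
      obtain ⟨i, hi⟩ := heq
      exact ⟨i, by simp [hD, hi]⟩
    set j : Fin n := D.min' hDne with hj'
    have hjD : j ∈ D := Finset.min'_mem D hDne
    have hjne : sortedVec u j ≠ sortedVec v j := by
      simpa [hD] using hjD
    have hpre : ∀ i, i < j → sortedVec u i = sortedVec v i := by
      intro i hi
      by_contra hne
      have : i ∈ D := by simp [hD, hne]
      have := Finset.min'_le D i this
      exact absurd (lt_of_lt_of_le hi this) (lt_irrefl i)
    rcases lt_or_gt_of_ne hjne with hlt | hgt
    · -- v beats u lexically: both sides false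
      have hPvu : R v u ∧ ¬ R u v :=
        aux12_lex_lemma R htrans hn hcomplete hstrongpareto hsymm hcompro hsep hv hu j
          (fun i hi => (hpre i hi).symm) hlt
      constructor
      · intro h; exact absurd h hPvu.2
      · intro h
        exfalso
        rcases h with h | ⟨j2, hpre2, hj2⟩
        · exact hjne (h j)
        · rcases lt_trichotomy j j2 with h' | h' | h'
          · exact hjne (hpre2 j h')
          · subst h'; linarith
          · exact absurd (hpre j2 h') (by intro he; rw [he] at hj2; linarith)
    · -- u beats v lexically: both sides true
      have hPuv : R u v ∧ ¬ R v u :=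
        aux12_lex_lemma R htrans hn hcomplete hstrongpareto hsymm hcompro hsep hu hv j
          hpre hgt
      exact ⟨fun _ => Or.inr ⟨j, hpre, hgt⟩, fun _ => hPuv.1⟩
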